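/- For λ, μ > 0 and t > 0: (1/(2√π·t^{3/2}))·∫₀^∞ ξ·exp(−ξ²/(4t))·(−μ·sin(λξ))dξ = −λμ·exp(−λ²t). -/

import Mathlib

open MeasureTheory Set Complex

lemma cosInt (a lam : ℝ) (ha : 0 < a) :
    ∫ x : ℝ, Real.cos (lam * x) * Real.exp (-a * x ^ 2)
      = Real.sqrt (Real.pi / a) * Real.exp (-lam ^ 2 / (4 * a)) := by
  have hb : (0:ℝ) < (a : ℂ).re := by simpa using ha
  have key := fourierIntegral_gaussian hb (lam : ℂ)
  have hint : Integrable (fun x : ℝ => cexp (I * lam * x) * cexp (-(a:ℂ) * x ^ 2)) := by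
    have h := integrable_cexp_quadratic hb (I * lam) 0
    refine h.congr (Filter.Eventually.of_forall fun x => ?_)
    show cexp (-(a:ℂ) * x ^ 2 + I * lam * x + 0) = cexp (I * lam * x) * cexp (-(a:ℂ) * x ^ 2)
    rw [← Complex.exp_add]; congr 1; ring
  have hre := integral_re hint
  rw [key] at hre
  have h1 : ∀ x : ℝ, RCLike.re (cexp (I * lam * x) * cexp (-(a:ℂ) * x ^ 2))
      = Real.cos (lam * x) * Real.exp (-a * x ^ 2) := by
    intro x
    have h2 : cexp (I * lam * x) * cexp (-(a:ℂ) * x ^ 2)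
        = cexp (((lam * x : ℝ) : ℂ) * I) * ((Real.exp (-a * x ^ 2) : ℝ) : ℂ) := by
      rw [Complex.ofReal_exp, ← Complex.exp_add, ← Complex.exp_add]; congr 1; push_cast; ring
    rw [h2]
    simp only [RCLike.re_to_complex, Complex.mul_re, Complex.exp_ofReal_mul_I_re,
      Complex.exp_ofReal_mul_I_im, Complex.ofReal_re, Complex.ofReal_im, mul_zero, sub_zero]
  rw [funext h1] at hre
  rw [hre]
  have h3 : ((Real.pi : ℂ) / a) ^ ((1:ℂ) / 2) = ((Real.sqrt (Real.pi / a) : ℝ) : ℂ) := by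
    rw [Real.sqrt_eq_rpow, Complex.ofReal_cpow (by positivity), ← Complex.ofReal_div]
    norm_num
  have h4 : (-(lam:ℂ) ^ 2 / (4 * a)) = ((-lam ^ 2 / (4 * a) : ℝ) : ℂ) := by push_cast; ring
  rw [h3, h4, ← Complex.ofReal_exp, ← Complex.ofReal_mul]
  simp only [RCLike.re_to_complex, Complex.ofReal_re]

lemma cosIntIoi (a lam : ℝ) (ha : 0 < a) (hlam : 0 < lam) :
    ∫ x in Ioi (0:ℝ), Real.cos (lam * x) * Real.exp (-a * x ^ 2)
      = Real.sqrt (Real.pi / a) / 2 * Real.exp (-lam ^ 2 / (4 * a)) := by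
  have h := integral_comp_abs (f := fun x => Real.cos (lam * x) * Real.exp (-a * x ^ 2))
  have h2 : ∀ x : ℝ, Real.cos (lam * |x|) * Real.exp (-a * |x| ^ 2)
      = Real.cos (lam * x) * Real.exp (-a * x ^ 2) := by
    intro x
    rcases abs_choice x with hx | hx <;> simp [hx, mul_neg, Real.cos_neg, neg_sq]
  simp only [h2] at h
  rw [cosInt a lam ha] at h
  linarith [h]

lemma sinIntIoi (lam t : ℝ) (hlam : 0 < lam) (ht : 0 < t) :
    ∫ x in Ioi (0:ℝ), x * Real.exp (-x ^ 2 / (4 * t)) * Real.sin (lam * x)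
      = 2 * t * lam * Real.sqrt (Real.pi * t) * Real.exp (-lam ^ 2 * t) := by
  have ha : (0:ℝ) < 1 / (4 * t) := by positivity
  have he : ∀ x : ℝ, -x ^ 2 / (4 * t) = -(1 / (4 * t)) * x ^ 2 := fun x => by ring
  have IF : IntegrableOn (fun x : ℝ => x * Real.exp (-x ^ 2 / (4 * t)) * Real.sin (lam * x))
      (Ioi 0) := by
    refine ((integrable_mul_exp_neg_mul_sq ha).integrableOn).mono'
      (Continuous.aestronglyMeasurable (by fun_prop)) ?_
    filter_upwards [self_mem_ae_restrict measurableSet_Ioi] with x hx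
    rw [Real.norm_eq_abs, abs_mul, abs_mul, abs_of_pos hx, abs_of_pos (Real.exp_pos _), he x]
    nlinarith [Real.abs_sin_le_one (lam * x), abs_nonneg (Real.sin (lam * x)),
      mul_pos hx (Real.exp_pos (-(1/(4*t)) * x ^ 2))]
  have IG : IntegrableOn (fun x : ℝ => Real.exp (-x ^ 2 / (4 * t)) * Real.cos (lam * x))
      (Ioi 0) := by
    refine ((integrable_exp_neg_mul_sq ha).integrableOn).mono'
      (Continuous.aestronglyMeasurable (by fun_prop)) ?_
    filter_upwards with x
    rw [Real.norm_eq_abs, abs_mul, abs_of_pos (Real.exp_pos _), he x]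
    nlinarith [Real.abs_cos_le_one (lam * x), Real.exp_pos (-(1/(4*t)) * x ^ 2),
      abs_nonneg (Real.cos (lam * x))]
  have hd : ∀ x : ℝ, HasDerivAt
      (fun x : ℝ => -2 * t * (Real.exp (-x ^ 2 / (4 * t)) * Real.sin (lam * x)))
      (x * Real.exp (-x ^ 2 / (4 * t)) * Real.sin (lam * x)
        - 2 * t * lam * (Real.exp (-x ^ 2 / (4 * t)) * Real.cos (lam * x))) x := by
    intro x
    have h1 : HasDerivAt (fun x : ℝ => -x ^ 2 / (4 * t)) (-x / (2 * t)) x := by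
      have := ((hasDerivAt_pow 2 x).neg).div_const (4 * t)
      refine this.congr_deriv ?_
      norm_num; field_simp; ring
    have h2 := h1.exp
    have h3 : HasDerivAt (fun x : ℝ => Real.sin (lam * x)) (lam * Real.cos (lam * x)) x := by
      simpa [mul_comm, Function.comp_def] using (Real.hasDerivAt_sin (lam * x)).comp x
        ((hasDerivAt_id x).const_mul lam)
    have h4 := (h2.mul h3).const_mul (-2 * t)
    refine h4.congr_deriv ?_
    field_simp; ring
  have htend : Filter.Tendsto
      (fun x : ℝ => -2 * t * (Real.exp (-x ^ 2 / (4 * t)) * Real.sin (lam * x)))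
      Filter.atTop (nhds 0) := by
    have hexp : Filter.Tendsto (fun x : ℝ => Real.exp (-x ^ 2 / (4 * t)))
        Filter.atTop (nhds 0) := by
      simp only [he]
      exact Real.tendsto_exp_atBot.comp
        ((Filter.tendsto_pow_atTop two_ne_zero).const_mul_atTop_of_neg (neg_lt_zero.mpr ha))
    have hbound : Filter.Tendsto (fun x : ℝ => 2 * t * Real.exp (-x ^ 2 / (4 * t)))
        Filter.atTop (nhds 0) := by
      simpa using hexp.const_mul (2 * t)
    refine squeeze_zero_norm (fun x => ?_) hbound
    rw [Real.norm_eq_abs, abs_mul, abs_mul, abs_mul, abs_of_pos ht,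
      abs_of_pos (Real.exp_pos _), show |(-2 : ℝ)| = 2 by norm_num]
    nlinarith [Real.abs_sin_le_one (lam * x), abs_nonneg (Real.sin (lam * x)),
      mul_pos (mul_pos two_pos ht) (Real.exp_pos (-x ^ 2 / (4 * t)))]
  have key := integral_Ioi_of_hasDerivAt_of_tendsto' (a := 0) (fun x _ => hd x)
    (IF.sub (IG.const_mul (2 * t * lam))) htend
  rw [integral_sub IF (IG.const_mul (2 * t * lam)), integral_const_mul] at key
  simp only [ne_eq, OfNat.ofNat_ne_zero, not_false_eq_true, zero_pow, neg_zero, zero_div,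
    Real.exp_zero, mul_zero, Real.sin_zero, mul_one, zero_sub, neg_neg, sub_eq_iff_eq_add] at key
  have hGval : ∫ x in Ioi (0:ℝ), Real.exp (-x ^ 2 / (4 * t)) * Real.cos (lam * x)
      = Real.sqrt (Real.pi * t) * Real.exp (-lam ^ 2 * t) := by
    have h5 : ∀ x : ℝ, Real.exp (-x ^ 2 / (4 * t)) * Real.cos (lam * x)
        = Real.cos (lam * x) * Real.exp (-(1 / (4 * t)) * x ^ 2) := by
      intro x; rw [he x]; ring
    simp only [h5]
    rw [cosIntIoi (1 / (4 * t)) lam ha hlam]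
    have h6 : Real.pi / (1 / (4 * t)) = 2 ^ 2 * (Real.pi * t) := by field_simp; ring
    have h7 : -lam ^ 2 / (4 * (1 / (4 * t))) = -lam ^ 2 * t := by field_simp
    rw [h6, h7, Real.sqrt_mul (by positivity), Real.sqrt_sq (by norm_num : (0:ℝ) ≤ 2)]
    ring
  rw [key, hGval]
  ring

theorem stmt17 (lam μ t : ℝ) (hlam : 0 < lam) (hμ : 0 < μ) (ht : 0 < t) :
    1 / (2 * Real.sqrt Real.pi * t ^ ((3:ℝ)/2)) *
        ∫ ξ in Set.Ioi (0:ℝ), ξ * Real.exp (-ξ ^ 2 / (4 * t)) * (-μ * Real.sin (lam * ξ))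
      = -lam * μ * Real.exp (-lam ^ 2 * t) := by
  have hkey := sinIntIoi lam t hlam ht
  have h1 : ∀ ξ : ℝ, ξ * Real.exp (-ξ ^ 2 / (4 * t)) * (-μ * Real.sin (lam * ξ))
      = -μ * (ξ * Real.exp (-ξ ^ 2 / (4 * t)) * Real.sin (lam * ξ)) := fun ξ => by ring
  simp only [h1]
  rw [MeasureTheory.integral_const_mul, hkey]
  have h2 : t ^ ((3:ℝ)/2) = t * Real.sqrt t := by
    rw [show (3:ℝ)/2 = 1 + 1/2 by norm_num, Real.rpow_add ht, Real.rpow_one,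
      ← Real.sqrt_eq_rpow]
  rw [h2, Real.sqrt_mul Real.pi_pos.le]
  have hsp : Real.sqrt Real.pi ≠ 0 := by positivity
  have hst : Real.sqrt t ≠ 0 := by positivity
  have hsq : Real.sqrt t * Real.sqrt t = t := Real.mul_self_sqrt ht.le
  field_simp
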